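/- Let 𝔡 be a metrized Lie algebra and 𝔠 ⊆ 𝔡 a coisotropic subalgebra (𝔠^⊥ ⊆ 𝔠), with quotient map π: 𝔠 → 𝔡' = 𝔠/𝔠^⊥. Then the fiber product 𝔩_𝔠 = {(ζ₁,ζ₂) ∈ 𝔠 × 𝔠 : π(ζ₁) = π(ζ₂)} is a Lagrangian Lie subalgebra of 𝔡̄ ⊕ 𝔡 (the direct sum with bilinear form ⟨(x₁,x₂),(y₁,y₂)⟩ = −⟨x₁,y₁⟩ + ⟨x₂,y₂⟩). -/

import Mathlib

/-- The orthogonal complement of a subspace with respect to a bilinear form. -/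
def orth {V : Type*} [AddCommGroup V] [Module ℝ V]
    (B : V →ₗ[ℝ] V →ₗ[ℝ] ℝ) (W : Submodule ℝ V) : Submodule ℝ V where
  carrier := {x | ∀ w ∈ W, B x w = 0}
  add_mem' := by
    intro a b ha hb w hw
    simp only [Set.mem_setOf_eq] at *
    rw [map_add, LinearMap.add_apply, ha w hw, hb w hw, add_zero]
  zero_mem' := by intro w hw; simp
  smul_mem' := by
    intro c a ha w hw
    simp only [Set.mem_setOf_eq] at *
    rw [map_smul, LinearMap.smul_apply, ha w hw, smul_zero]
/-- For a coisotropic subalgebra 𝔠 ⊆ 𝔡 (𝔠^⊥ ⊆ 𝔠), the fiber product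
𝔩_𝔠 = {(ζ₁,ζ₂) ∈ 𝔠 × 𝔠 : ζ₁ − ζ₂ ∈ 𝔠^⊥} (pairs with the same image in 𝔡' = 𝔠/𝔠^⊥) is a
Lagrangian Lie subalgebra of 𝔡̄ ⊕ 𝔡, with the form ⟨(x₁,x₂),(y₁,y₂)⟩ = −⟨x₁,y₁⟩ + ⟨x₂,y₂⟩.
(Membership in 𝔩_𝔠 is the predicate P; "Lagrangian" is the statement that P holds exactly
for the elements orthogonal to all elements satisfying P.) -/
theorem stmt16 (𝔡 : Type*) [LieRing 𝔡] [LieAlgebra ℝ 𝔡] [FiniteDimensional ℝ 𝔡]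
    (B : 𝔡 →ₗ[ℝ] 𝔡 →ₗ[ℝ] ℝ)
    (hsymm : ∀ x y : 𝔡, B x y = B y x)
    (hnondeg : ∀ x : 𝔡, (∀ y : 𝔡, B x y = 0) → x = 0)
    (hinv : ∀ x y z : 𝔡, B ⁅x, y⁆ z + B y ⁅x, z⁆ = 0)
    (𝔠 : LieSubalgebra ℝ 𝔡) (hco : orth B 𝔠.toSubmodule ≤ 𝔠.toSubmodule) :
    let P : 𝔡 × 𝔡 → Prop := fun p =>
      p.1 ∈ 𝔠 ∧ p.2 ∈ 𝔠 ∧ p.1 - p.2 ∈ orth B 𝔠.toSubmodule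
    -- 𝔩_𝔠 is a linear subspace …
    (∀ p q : 𝔡 × 𝔡, P p → P q → P (p + q)) ∧
    (∀ (c : ℝ) (p : 𝔡 × 𝔡), P p → P (c • p)) ∧
    -- … closed under the (componentwise) bracket, i.e. a Lie subalgebra of 𝔡̄ ⊕ 𝔡 …
    (∀ p q : 𝔡 × 𝔡, P p → P q → P (⁅p.1, q.1⁆, ⁅p.2, q.2⁆)) ∧
    -- … and Lagrangian for ⟨(x₁,x₂),(y₁,y₂)⟩ = −⟨x₁,y₁⟩ + ⟨x₂,y₂⟩
    (∀ p : 𝔡 × 𝔡, P p ↔ ∀ q : 𝔡 × 𝔡, P q → -(B p.1 q.1) + B p.2 q.2 = 0) := by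
  intro P
  have mem_orth : ∀ x : 𝔡, x ∈ orth B 𝔠.toSubmodule ↔ ∀ w ∈ 𝔠, B x w = 0 := fun x => Iff.rfl
  -- 𝔨 is an ideal of 𝔠
  have hideal : ∀ c ∈ 𝔠, ∀ k ∈ orth B 𝔠.toSubmodule, ⁅c, k⁆ ∈ orth B 𝔠.toSubmodule := by
    intro c hc k hk w hw
    have h1 := hinv c k w
    have h2 : B k ⁅c, w⁆ = 0 := hk _ (𝔠.lie_mem hc hw)
    linarith
  have hP : ∀ p : 𝔡 × 𝔡, P p → ∀ q : 𝔡 × 𝔡, P q → -(B p.1 q.1) + B p.2 q.2 = 0 := by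
    rintro p ⟨hp1, hp2, hpk⟩ q ⟨hq1, hq2, hqk⟩
    have e1 : B (p.1 - p.2) q.1 = 0 := hpk _ hq1
    have e2 : B (q.1 - q.2) p.2 = 0 := hqk _ hp2
    have e1' : B p.1 q.1 - B p.2 q.1 = 0 := by simpa [map_sub] using e1
    have e2' : B q.1 p.2 - B q.2 p.2 = 0 := by simpa [map_sub] using e2
    have := hsymm q.1 p.2
    have := hsymm q.2 p.2
    linarith
  -- nondegeneracy and double orthogonal
  have hBnd : LinearMap.BilinForm.Nondegenerate B := by
    refine ⟨fun x hx => hnondeg x hx, fun y hy => hnondeg y (fun x => by rw [hsymm]; exact hy x)⟩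
  have hBrefl : LinearMap.BilinForm.IsRefl B := fun x y h => by rw [hsymm]; exact h
  have horth : ∀ W : Submodule ℝ 𝔡, orth B W = LinearMap.BilinForm.orthogonal B W := by
    intro W
    ext x
    constructor
    · intro hx n hn
      exact hBrefl _ _ (hx n hn)
    · intro hx w hw
      exact hBrefl _ _ (hx w hw)
  have hdouble : orth B (orth B 𝔠.toSubmodule) = 𝔠.toSubmodule := by
    rw [horth, horth, LinearMap.BilinForm.orthogonal_orthogonal hBnd hBrefl]
  refine ⟨?_, ?_, ?_, ?_⟩
  · rintro p q ⟨hp1, hp2, hpk⟩ ⟨hq1, hq2, hqk⟩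
    refine ⟨𝔠.add_mem hp1 hq1, 𝔠.add_mem hp2 hq2, ?_⟩
    have : p.1 + q.1 - (p.2 + q.2) = (p.1 - p.2) + (q.1 - q.2) := by abel
    rw [Prod.fst_add, Prod.snd_add, this]
    exact (orth B 𝔠.toSubmodule).add_mem hpk hqk
  · rintro c p ⟨hp1, hp2, hpk⟩
    refine ⟨𝔠.smul_mem c hp1, 𝔠.smul_mem c hp2, ?_⟩
    have : c • p.1 - c • p.2 = c • (p.1 - p.2) := by rw [smul_sub]
    rw [Prod.smul_fst, Prod.smul_snd, this]
    exact (orth B 𝔠.toSubmodule).smul_mem c hpk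
  · rintro p q ⟨hp1, hp2, hpk⟩ ⟨hq1, hq2, hqk⟩
    refine ⟨𝔠.lie_mem hp1 hq1, 𝔠.lie_mem hp2 hq2, ?_⟩
    have key : ⁅p.1, q.1⁆ - ⁅p.2, q.2⁆ = ⁅p.1 - p.2, q.1⁆ + ⁅p.2, q.1 - q.2⁆ := by
      rw [sub_lie, lie_sub]; abel
    show ⁅p.1, q.1⁆ - ⁅p.2, q.2⁆ ∈ orth B 𝔠.toSubmodule
    rw [key]
    refine (orth B 𝔠.toSubmodule).add_mem ?_ (hideal _ hp2 _ hqk)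
    have : ⁅p.1 - p.2, q.1⁆ = -⁅q.1, p.1 - p.2⁆ := by rw [lie_skew]
    rw [this]
    exact (orth B 𝔠.toSubmodule).neg_mem (hideal _ hq1 _ hpk)
  · intro p
    constructor
    · exact hP p
    · intro h
      have hk1 : ∀ k ∈ orth B 𝔠.toSubmodule, B p.1 k = 0 := by
        intro k hk
        have := h (k, 0) ⟨hco hk, 𝔠.zero_mem, by simpa using hk⟩
        simpa using this
      have hk2 : ∀ k ∈ orth B 𝔠.toSubmodule, B p.2 k = 0 := by
        intro k hk
        have hk' : (0 : 𝔡) - k ∈ orth B 𝔠.toSubmodule := by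
          simpa using (orth B 𝔠.toSubmodule).neg_mem hk
        have := h (0, k) ⟨𝔠.zero_mem, hco hk, hk'⟩
        simpa using this
      have hp1 : p.1 ∈ 𝔠 := by
        have : p.1 ∈ orth B (orth B 𝔠.toSubmodule) := hk1
        rw [hdouble] at this; exact this
      have hp2 : p.2 ∈ 𝔠 := by
        have : p.2 ∈ orth B (orth B 𝔠.toSubmodule) := hk2
        rw [hdouble] at this; exact this
      refine ⟨hp1, hp2, ?_⟩
      intro w hw
      have := h (w, w) ⟨hw, hw, by simp [(orth B 𝔠.toSubmodule).zero_mem]⟩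
      have : B p.2 w - B p.1 w = 0 := by linarith
      rw [map_sub, LinearMap.sub_apply]
      linarith
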